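/- For all natural numbers n ≥ 1, S_n · (S_n + S_{n-1}) = Σ_{i=0}^{2n} S_i, in ℤ[x]. -/

import Mathlib

/-- Chebyshev polynomials of the second kind in ℤ[x]. -/
noncomputable def chebS : ℕ → Polynomial ℤ
  | 0 => 1
  | 1 => Polynomial.X
  | (n+2) => Polynomial.X * chebS (n+1) - chebS n

lemma chebS_key : ∀ n m : ℕ,
    chebS (m + n + 2) = chebS (m + 1) * chebS (n + 1) - chebS m * chebS n
  | 0, m => by
    show chebS (m + 2) = chebS (m + 1) * chebS 1 - chebS m * chebS 0
    rw [chebS]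
    simp [chebS]
    ring
  | 1, m => by
    show chebS (m + 3) = chebS (m + 1) * chebS 2 - chebS m * chebS 1
    have h1 : chebS (m + 3) = Polynomial.X * chebS (m + 2) - chebS (m + 1) := rfl
    have h2 : chebS (m + 2) = Polynomial.X * chebS (m + 1) - chebS m := rfl
    have h3 : chebS 2 = Polynomial.X * Polynomial.X - 1 := by
      show Polynomial.X * chebS 1 - chebS 0 = _; simp [chebS]
    rw [h1, h2, h3]
    simp [chebS]
    ring
  | (n + 2), m => by
    have ih0 := chebS_key n m
    have ih1 := chebS_key (n + 1) m
    have h1 : chebS (m + (n + 2) + 2) =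
        Polynomial.X * chebS (m + n + 3) - chebS (m + n + 2) := by
      have e : m + (n + 2) + 2 = (m + n + 2) + 2 := by ring
      rw [e, chebS]
    have h2 : chebS (n + 2 + 1) = Polynomial.X * chebS (n + 2) - chebS (n + 1) := rfl
    rw [h1, h2]
    have e1 : m + (n + 1) + 2 = m + n + 3 := by ring
    rw [e1] at ih1
    simp only [show n + 1 + 1 = n + 2 from rfl] at ih1
    rw [ih0, ih1]
    have h3 : chebS (n + 2) = Polynomial.X * chebS (n + 1) - chebS n := rfl
    linear_combination (chebS m) * h3

theorem chebS_mul_add_pred (n : ℕ) (hn : 1 ≤ n) :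
    chebS n * (chebS n + chebS (n - 1)) = ∑ i ∈ Finset.range (2 * n + 1), chebS i := by
  induction n, hn using Nat.le_induction with
  | base =>
    have h2 : chebS 2 = Polynomial.X * Polynomial.X - 1 := by
      show Polynomial.X * chebS 1 - chebS 0 = _; simp [chebS]
    simp [Finset.sum_range_succ, chebS, h2]
    ring
  | succ n hn ih =>
    obtain ⟨k, rfl⟩ : ∃ k, n = k + 1 := ⟨n - 1, (Nat.succ_pred_eq_of_pos hn).symm⟩
    have e : 2 * (k + 1 + 1) + 1 = (2 * (k + 1) + 1) + 1 + 1 := by ring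
    rw [e, Finset.sum_range_succ, Finset.sum_range_succ, ← ih]
    have hA := chebS_key k (k + 1)
    have hB := chebS_key (k + 1) (k + 1)
    have eA : k + 1 + k + 2 = 2 * (k + 1) + 1 := by ring
    have eB : k + 1 + (k + 1) + 2 = 2 * (k + 1) + 1 + 1 := by ring
    rw [eA] at hA
    rw [eB] at hB
    simp only [Nat.add_sub_cancel]
    rw [hA, hB]
    ring
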